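/- Let R be a commutative ring and let I = (f_1, ..., f_m) be an ideal generated by a regular sequence f_1, ..., f_m. If a ∈ I^ℓ \ I^{ℓ+1} for some nonnegative integer ℓ, then for every index j and every positive integer i, one has a·f_j^i ∈ I^{ℓ+i} \ I^{ℓ+i+1}. -/

import Mathlib

/-!
We prove that a regular sequence is quasi-regular: if `F` is a homogeneous polynomial
of degree `d` with `F(f) ∈ I^(d+1)` then all coefficients of `F` lie in `I`.
From this the main theorem follows.
-/

open MvPolynomial

namespace RegSeqQuasiAux

variable {R : Type*} [CommRing R] {m : ℕ}

/-- The ideal generated by the first `k` elements of the sequence. -/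
def Jid (f : Fin m → R) (k : ℕ) : Ideal R := Ideal.span (f '' {l : Fin m | (l : ℕ) < k})

/-- All monomials of `F` only use variables of index `< k`. -/
def VarLt (k : ℕ) (F : MvPolynomial (Fin m) R) : Prop :=
  ∀ α : Fin m →₀ ℕ, F.coeff α ≠ 0 → ∀ l : Fin m, α l ≠ 0 → (l : ℕ) < k

lemma Jid_mono (f : Fin m → R) {k k' : ℕ} (h : k ≤ k') : Jid f k ≤ Jid f k' :=
  Ideal.span_mono (Set.image_mono fun _ hl => lt_of_lt_of_le hl h)

lemma mem_Jid (f : Fin m → R) {k : ℕ} {l : Fin m} (hl : (l : ℕ) < k) : f l ∈ Jid f k :=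
  Ideal.subset_span ⟨l, hl, rfl⟩

lemma degree_single (j : Fin m) (n : ℕ) : (Finsupp.single j n : Fin m →₀ ℕ).degree = n := by
  by_cases hn : n = 0
  · simp [hn]
  · rw [Finsupp.degree_apply, Finsupp.support_single_ne_zero _ hn, Finset.sum_singleton,
      Finsupp.single_eq_same]

lemma degree_add (α β : Fin m →₀ ℕ) : (α + β).degree = α.degree + β.degree := by
  rw [Finsupp.degree_eq_weight_one]
  exact map_add _ α β

lemma single_add_sub {α : Fin m →₀ ℕ} {j : Fin m} (h : α j ≠ 0) :
    Finsupp.single j 1 + (α - Finsupp.single j 1) = α := by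
  ext l
  rw [Finsupp.add_apply, Finsupp.tsub_apply]
  rcases eq_or_ne j l with rfl | hl
  · rw [Finsupp.single_eq_same]
    omega
  · rw [Finsupp.single_eq_of_ne' hl]
    omega

lemma degree_sub_single {α : Fin m →₀ ℕ} {j : Fin m} (h : α j ≠ 0) :
    (α - Finsupp.single j 1).degree + 1 = α.degree := by
  conv_rhs => rw [← single_add_sub h]
  rw [degree_add, degree_single, add_comm]

lemma isHomog_deg {F : MvPolynomial (Fin m) R} {d : ℕ} (hF : F.IsHomogeneous d)
    {α : Fin m →₀ ℕ} (hα : F.coeff α ≠ 0) : α.degree = d := by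
  by_contra h
  exact hα (hF.coeff_eq_zero h)

lemma prod_pow_mem (f : Fin m → R) (k : ℕ) (α : Fin m →₀ ℕ)
    (hvar : ∀ l : Fin m, α l ≠ 0 → (l : ℕ) < k) :
    (α.prod fun l e => f l ^ e) ∈ Jid f k ^ α.degree := by
  induction α using Finsupp.induction with
  | zero => simp
  | single_add j n g hg hn ih =>
    have hj : (j : ℕ) < k := by
      apply hvar j
      simp only [Finsupp.add_apply, Finsupp.single_eq_same]
      have : g j = 0 := Finsupp.notMem_support_iff.mp hg
      omega
    have hvar' : ∀ l : Fin m, g l ≠ 0 → (l : ℕ) < k := by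
      intro l hl
      apply hvar l
      simp only [Finsupp.add_apply]
      omega
    rw [Finsupp.prod_add_index (fun _ _ => pow_zero _) (fun _ _ _ _ => pow_add _ _ _),
      degree_add, degree_single, pow_add]
    refine Ideal.mul_mem_mul ?_ (ih hvar')
    rw [Finsupp.prod_single_index (h := fun l e => f l ^ e) (pow_zero _)]
    exact Ideal.pow_mem_pow (mem_Jid f hj) n

lemma eval_as_sum (f : Fin m → R) (F : MvPolynomial (Fin m) R) :
    eval f F = ∑ v ∈ F.support, F.coeff v * v.prod fun n e => f n ^ e := by
  conv_lhs => rw [F.as_sum]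
  rw [map_sum]
  exact Finset.sum_congr rfl fun v _ => eval_monomial

lemma eval_mem_pow (f : Fin m → R) {k d : ℕ} {F : MvPolynomial (Fin m) R}
    (hF : F.IsHomogeneous d) (hV : VarLt k F) : eval f F ∈ Jid f k ^ d := by
  rw [eval_as_sum]
  apply Ideal.sum_mem
  intro α hα
  have hc : F.coeff α ≠ 0 := mem_support_iff.mp hα
  have := prod_pow_mem f k α (hV α hc)
  rw [isHomog_deg hF hc] at this
  exact Ideal.mul_mem_left _ _ this

lemma eval_mem_pow_succ (f : Fin m → R) {k d : ℕ} {F : MvPolynomial (Fin m) R}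
    (hF : F.IsHomogeneous d) (hV : VarLt k F) (hc : ∀ α, F.coeff α ∈ Jid f k) :
    eval f F ∈ Jid f k ^ (d + 1) := by
  rw [eval_as_sum, pow_succ']
  apply Ideal.sum_mem
  intro α hα
  have hc0 : F.coeff α ≠ 0 := mem_support_iff.mp hα
  have := prod_pow_mem f k α (hV α hc0)
  rw [isHomog_deg hF hc0] at this
  exact Ideal.mul_mem_mul (hc α) this

lemma VarLt.add {k : ℕ} {F G : MvPolynomial (Fin m) R} (hF : VarLt k F) (hG : VarLt k G) :
    VarLt k (F + G) := by
  intro α hα l hl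
  rw [coeff_add] at hα
  rcases (by by_contra h; push_neg at h; rw [h.1, h.2, add_zero] at hα; exact hα rfl :
      F.coeff α ≠ 0 ∨ G.coeff α ≠ 0) with h | h
  · exact hF α h l hl
  · exact hG α h l hl

lemma VarLt.C_mul {k : ℕ} {F : MvPolynomial (Fin m) R} (r : R) (hF : VarLt k F) :
    VarLt k (C r * F) := by
  intro α hα l hl
  rw [coeff_C_mul] at hα
  exact hF α (right_ne_zero_of_mul hα) l hl

lemma VarLt.sub {k : ℕ} {F G : MvPolynomial (Fin m) R} (hF : VarLt k F) (hG : VarLt k G) :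
    VarLt k (F - G) := by
  rw [sub_eq_add_neg]
  apply hF.add
  intro α hα l hl
  rw [coeff_neg, neg_ne_zero] at hα
  exact hG α hα l hl

lemma VarLt.mul {k : ℕ} {F G : MvPolynomial (Fin m) R} (hF : VarLt k F) (hG : VarLt k G) :
    VarLt k (F * G) := by
  classical
  intro α hα l hl
  have hsupp : α ∈ (F * G).support := mem_support_iff.mpr hα
  obtain ⟨β, hβ, γ, hγ, hbg⟩ := Finset.mem_add.mp (support_mul F G hsupp)
  subst hbg
  rw [Finsupp.add_apply] at hl
  rcases (by omega : β l ≠ 0 ∨ γ l ≠ 0) with h | h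
  · exact hF β (mem_support_iff.mp hβ) l h
  · exact hG γ (mem_support_iff.mp hγ) l h

lemma exists_rep (f : Fin m → R) (k : ℕ) :
    ∀ (e : ℕ) (b : R), b ∈ Jid f k ^ e →
      ∃ F : MvPolynomial (Fin m) R, F.IsHomogeneous e ∧ VarLt k F ∧ eval f F = b := by
  intro e
  induction e with
  | zero =>
    intro b _
    refine ⟨C b, isHomogeneous_C _ _, ?_, eval_C _⟩
    intro α hα l hl
    rw [coeff_C] at hα
    by_cases h0 : (0 : Fin m →₀ ℕ) = α
    · subst h0; simp at hl
    · rw [if_neg h0] at hα; exact absurd rfl hα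
  | succ e ih =>
    intro b hb
    rw [pow_succ] at hb
    refine Submodule.mul_induction_on hb ?_ ?_
    · intro x hx y hy
      obtain ⟨F, hF, hFV, hFe⟩ := ih x hx
      have hy1 : ∃ G : MvPolynomial (Fin m) R,
          G.IsHomogeneous 1 ∧ VarLt k G ∧ eval f G = y := by
        induction hy using Submodule.span_induction with
        | mem z hz =>
          classical
          obtain ⟨l, hl, rfl⟩ := hz
          refine ⟨X l, isHomogeneous_X _ _, ?_, eval_X _⟩
          intro α hα l' hl'
          rw [coeff_X'] at hα
          by_cases h0 : Finsupp.single l 1 = α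
          · subst h0
            have : l' = l := by
              by_contra hne
              rw [Finsupp.single_apply, if_neg (fun h => hne h.symm)] at hl'
              exact hl' rfl
            subst this; exact hl
          · rw [if_neg h0] at hα; exact absurd rfl hα
        | zero => exact ⟨0, isHomogeneous_zero _ _ _, by intro α hα; simp at hα, map_zero _⟩
        | add u v hu hv ihu ihv =>
          obtain ⟨G1, h1, h1V, h1e⟩ := ihu
          obtain ⟨G2, h2, h2V, h2e⟩ := ihv
          exact ⟨G1 + G2, h1.add h2, h1V.add h2V, by rw [map_add, h1e, h2e]⟩
        | smul r u hu ihu =>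
          obtain ⟨G, hG, hGV, hGe⟩ := ihu
          exact ⟨C r * G, hG.C_mul r, hGV.C_mul r, by rw [map_mul, eval_C, hGe, smul_eq_mul]⟩
      obtain ⟨G, hG, hGV, hGe⟩ := hy1
      refine ⟨F * G, ?_, hFV.mul hGV, by rw [map_mul, hFe, hGe]⟩
      exact hF.mul hG
    · rintro x y ⟨F, hF, hFV, hFe⟩ ⟨G, hG, hGV, hGe⟩
      exact ⟨F + G, hF.add hG, hFV.add hGV, by rw [map_add, hFe, hGe]⟩

/-- The part of `F` whose monomials do not involve variable `j`. -/
noncomputable def Hpart (j : Fin m) (F : MvPolynomial (Fin m) R) : MvPolynomial (Fin m) R :=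
  ∑ α ∈ F.support.filter (fun α => α j = 0), monomial α (F.coeff α)

/-- The quotient of the rest of `F` by `X j`. -/
noncomputable def Qpart (j : Fin m) (F : MvPolynomial (Fin m) R) : MvPolynomial (Fin m) R :=
  ∑ α ∈ F.support.filter (fun α => ¬ α j = 0),
    monomial (α - Finsupp.single j 1) (F.coeff α)

lemma X_mul_monomial' (j : Fin m) (β : Fin m →₀ ℕ) (c : R) :
    X j * monomial β c = monomial (Finsupp.single j 1 + β) c := by
  rw [X, monomial_mul, one_mul]

lemma decomp (j : Fin m) (F : MvPolynomial (Fin m) R) :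
    F = X j * Qpart j F + Hpart j F := by
  conv_lhs => rw [F.as_sum]
  rw [← Finset.sum_filter_add_sum_filter_not F.support (fun α => ¬ α j = 0)]
  congr 1
  · rw [Qpart, Finset.mul_sum]
    apply Finset.sum_congr rfl
    intro α hα
    have hαj : ¬ α j = 0 := (Finset.mem_filter.mp hα).2
    rw [X_mul_monomial', single_add_sub hαj]
  · rw [Hpart]
    apply Finset.sum_congr _ (fun _ _ => rfl)
    apply Finset.filter_congr
    intro α _
    simp only [not_not]

lemma coeff_Hpart_of_eq_zero (j : Fin m) (F : MvPolynomial (Fin m) R) {β : Fin m →₀ ℕ}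
    (hβ : β j = 0) : (Hpart j F).coeff β = F.coeff β := by
  rw [Hpart, coeff_sum, Finset.sum_eq_single β]
  · rw [coeff_monomial, if_pos rfl]
  · intro α _ hne
    rw [coeff_monomial, if_neg hne]
  · intro hβs
    rw [coeff_monomial, if_pos rfl]
    by_contra h
    exact hβs (Finset.mem_filter.mpr ⟨mem_support_iff.mpr h, hβ⟩)

lemma coeff_Qpart_of_ne_zero (j : Fin m) (F : MvPolynomial (Fin m) R) {β : Fin m →₀ ℕ}
    (hβ : ¬ β j = 0) : (Qpart j F).coeff (β - Finsupp.single j 1) = F.coeff β := by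
  rw [Qpart, coeff_sum, Finset.sum_eq_single β]
  · rw [coeff_monomial, if_pos rfl]
  · intro α hα hne
    rw [coeff_monomial, if_neg]
    intro heq
    apply hne
    have hαj : ¬ α j = 0 := (Finset.mem_filter.mp hα).2
    have := congrArg (fun γ => Finsupp.single j 1 + γ) heq
    simpa only [single_add_sub hαj, single_add_sub hβ] using this
  · intro hβs
    rw [coeff_monomial, if_pos rfl]
    by_contra h
    exact hβs (Finset.mem_filter.mpr ⟨mem_support_iff.mpr h, hβ⟩)

lemma Hpart_support (j : Fin m) (F : MvPolynomial (Fin m) R) {γ : Fin m →₀ ℕ}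
    (h : (Hpart j F).coeff γ ≠ 0) : γ ∈ F.support ∧ γ j = 0 := by
  rw [Hpart, coeff_sum] at h
  obtain ⟨α, hα, hne⟩ := Finset.exists_ne_zero_of_sum_ne_zero h
  rw [coeff_monomial] at hne
  by_cases heq : α = γ
  · subst heq
    exact Finset.mem_filter.mp hα
  · rw [if_neg heq] at hne
    exact absurd rfl hne

lemma Qpart_support (j : Fin m) (F : MvPolynomial (Fin m) R) {γ : Fin m →₀ ℕ}
    (h : (Qpart j F).coeff γ ≠ 0) :
    ∃ α, α ∈ F.support ∧ ¬ α j = 0 ∧ γ = α - Finsupp.single j 1 := by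
  rw [Qpart, coeff_sum] at h
  obtain ⟨α, hα, hne⟩ := Finset.exists_ne_zero_of_sum_ne_zero h
  rw [coeff_monomial] at hne
  by_cases heq : α - Finsupp.single j 1 = γ
  · obtain ⟨h1, h2⟩ := Finset.mem_filter.mp hα
    exact ⟨α, h1, h2, heq.symm⟩
  · rw [if_neg heq] at hne
    exact absurd rfl hne

lemma Hpart_homog {j : Fin m} {F : MvPolynomial (Fin m) R} {d : ℕ}
    (hF : F.IsHomogeneous d) : (Hpart j F).IsHomogeneous d := by
  apply IsHomogeneous.sum
  intro α hα
  exact isHomogeneous_monomial _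
    (isHomog_deg hF (mem_support_iff.mp (Finset.mem_filter.mp hα).1))

lemma Qpart_homog {j : Fin m} {F : MvPolynomial (Fin m) R} {d : ℕ}
    (hF : F.IsHomogeneous (d + 1)) : (Qpart j F).IsHomogeneous d := by
  apply IsHomogeneous.sum
  intro α hα
  obtain ⟨h1, h2⟩ := Finset.mem_filter.mp hα
  apply isHomogeneous_monomial
  have := degree_sub_single (α := α) (j := j) h2
  have hαd := isHomog_deg hF (mem_support_iff.mp h1)
  omega

lemma Hpart_varLt {k : ℕ} (hk : k < m) {F : MvPolynomial (Fin m) R}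
    (hV : VarLt (k + 1) F) : VarLt k (Hpart ⟨k, hk⟩ F) := by
  intro γ hγ l hl
  obtain ⟨hαs, hαj⟩ := Hpart_support _ _ hγ
  have hl1 := hV γ (mem_support_iff.mp hαs) l hl
  rcases Nat.lt_succ_iff_lt_or_eq.mp hl1 with h | h
  · exact h
  · exfalso
    have hlj : l = ⟨k, hk⟩ := Fin.ext h
    rw [hlj] at hl
    exact hl hαj

lemma Qpart_varLt {k' : ℕ} {j : Fin m} {F : MvPolynomial (Fin m) R}
    (hV : VarLt k' F) : VarLt k' (Qpart j F) := by
  intro γ hγ l hl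
  obtain ⟨α, hαs, hαj, rfl⟩ := Qpart_support j F hγ
  apply hV α (mem_support_iff.mp hαs) l
  intro h0
  apply hl
  rw [Finsupp.tsub_apply, h0]
  simp

lemma eval_eq_coeff_zero (f : Fin m → R) {F : MvPolynomial (Fin m) R}
    (hsupp : F.support ⊆ {0}) : eval f F = F.coeff 0 := by
  rw [eval_as_sum, Finset.sum_subset hsupp]
  · simp
  · intro α _ hα
    rw [notMem_support_iff.mp hα, zero_mul]

lemma coeff_mem_of_homog_zero (f : Fin m → R) {k : ℕ} {F : MvPolynomial (Fin m) R}
    (hF : F.IsHomogeneous 0) (hev : eval f F ∈ Jid f k ^ 1) :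
    ∀ α, F.coeff α ∈ Jid f k := by
  have hsupp : F.support ⊆ {0} := by
    intro β hβ
    rw [Finset.mem_singleton, ← Finsupp.degree_eq_zero_iff]
    exact isHomog_deg hF (mem_support_iff.mp hβ)
  intro α
  by_cases hα : α = 0
  · subst hα
    rw [← eval_eq_coeff_zero f hsupp]
    rwa [pow_one] at hev
  · have : α ∉ F.support := fun h => hα (Finset.mem_singleton.mp (hsupp h))
    rw [notMem_support_iff.mp this]
    exact zero_mem _

/-- The cancellation lemma: assuming quasi-regularity for the first `k` elements,
the `k`-th element can be cancelled from `Jid f k ^ e`. -/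
lemma cancel_lemma (f : Fin m → R)
    (hreg : ∀ k : Fin m, ∀ r : R,
      r * f k ∈ Ideal.span (f '' {l : Fin m | l < k}) →
      r ∈ Ideal.span (f '' {l : Fin m | l < k}))
    (k : ℕ) (hk : k < m)
    (P : ∀ (d : ℕ) (F : MvPolynomial (Fin m) R), F.IsHomogeneous d → VarLt k F →
      eval f F ∈ Jid f k ^ (d + 1) → ∀ α, F.coeff α ∈ Jid f k) :
    ∀ (e : ℕ) (c : R), f ⟨k, hk⟩ * c ∈ Jid f k ^ e → c ∈ Jid f k ^ e := by
  have hset : Jid f k = Ideal.span (f '' {l : Fin m | l < ⟨k, hk⟩}) := by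
    have hs : {l : Fin m | (l : ℕ) < k} = {l : Fin m | l < ⟨k, hk⟩} := by
      ext l; simp [Fin.lt_def]
    unfold Jid
    rw [hs]
  intro e
  induction e with
  | zero => intro c _; simp
  | succ e ih =>
    intro c hc
    have hce : c ∈ Jid f k ^ e := ih c (Ideal.pow_le_pow_right (Nat.le_succ e) hc)
    obtain ⟨Cp, hCp, hCV, hCe⟩ := exists_rep f k e c hce
    have hcoeff : ∀ α, (C (f ⟨k, hk⟩) * Cp).coeff α ∈ Jid f k := by
      apply P e (C (f ⟨k, hk⟩) * Cp) (hCp.C_mul _) (hCV.C_mul _)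
      rw [map_mul, eval_C, hCe]
      exact hc
    have hcoeff' : ∀ α, Cp.coeff α ∈ Jid f k := by
      intro α
      have h1 := hcoeff α
      rw [coeff_C_mul] at h1
      rw [hset] at h1 ⊢
      exact hreg ⟨k, hk⟩ _ (by rwa [mul_comm])
    have := eval_mem_pow_succ f hCp hCV hcoeff'
    rwa [hCe] at this

/-- The key theorem: a regular sequence is quasi-regular. -/
theorem keyP (f : Fin m → R)
    (hreg : ∀ k : Fin m, ∀ r : R,
      r * f k ∈ Ideal.span (f '' {l : Fin m | l < k}) →
      r ∈ Ideal.span (f '' {l : Fin m | l < k})) :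
    ∀ k, k ≤ m → ∀ (d : ℕ) (F : MvPolynomial (Fin m) R), F.IsHomogeneous d → VarLt k F →
      eval f F ∈ Jid f k ^ (d + 1) → ∀ α, F.coeff α ∈ Jid f k := by
  intro k
  induction k with
  | zero =>
    intro _ d F hF hV hev α
    have hJ : Jid f 0 = ⊥ := by
      unfold Jid
      convert Ideal.span_empty
      rw [Set.image_eq_empty]
      ext l
      simp
    rw [hJ] at hev ⊢
    rw [← Ideal.zero_eq_bot, zero_pow (Nat.succ_ne_zero d), Ideal.zero_eq_bot, Ideal.mem_bot] at hev
    have hsupp : F.support ⊆ {0} := by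
      intro β hβ
      rw [Finset.mem_singleton]
      ext l
      by_contra hne
      exact absurd (hV β (mem_support_iff.mp hβ) l (by simpa using hne)) (Nat.not_lt_zero _)
    rw [Ideal.mem_bot]
    by_cases hα : α = 0
    · subst hα
      rw [← eval_eq_coeff_zero f hsupp, hev]
    · have : α ∉ F.support := fun h => hα (Finset.mem_singleton.mp (hsupp h))
      exact notMem_support_iff.mp this
  | succ k ihk =>
    intro hk1 d
    have hk : k < m := hk1
    have Pk := ihk (le_of_lt hk)
    have canc := cancel_lemma f hreg k hk Pk
    set j : Fin m := ⟨k, hk⟩ with hjdef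
    have hfj : f j ∈ Jid f (k + 1) := mem_Jid f (Nat.lt_succ_self k)
    have hJle : Jid f k ≤ Jid f (k + 1) := Jid_mono f (Nat.le_succ k)
    induction d with
    | zero =>
      intro F hF hV hev
      exact coeff_mem_of_homog_zero f hF hev
    | succ d ihd =>
      intro F hF hV hev
      -- parts of F
      have hQF_homog : (Qpart j F).IsHomogeneous d := Qpart_homog hF
      have hQF_var : VarLt (k + 1) (Qpart j F) := Qpart_varLt hV
      have hHF_homog : (Hpart j F).IsHomogeneous (d + 1) := Hpart_homog hF
      have hHF_var : VarLt k (Hpart j F) := Hpart_varLt hk hV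
      have hevF : eval f F = f j * eval f (Qpart j F) + eval f (Hpart j F) := by
        conv_lhs => rw [decomp j F]
        rw [map_add, map_mul, eval_X]
      have hH_mem : eval f (Hpart j F) ∈ Jid f k ^ (d + 1) := eval_mem_pow f hHF_homog hHF_var
      -- decompose the witness of hev
      obtain ⟨G, hG, hGV, hGe⟩ := exists_rep f (k + 1) (d + 2) _ hev
      have hq' : eval f (Qpart j G) ∈ Jid f (k + 1) ^ (d + 1) :=
        eval_mem_pow f (Qpart_homog hG) (Qpart_varLt hGV)
      have hh' : eval f (Hpart j G) ∈ Jid f k ^ (d + 2) :=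
        eval_mem_pow f (Hpart_homog hG) (Hpart_varLt hk hGV)
      have hevG : eval f F = f j * eval f (Qpart j G) + eval f (Hpart j G) := by
        conv_lhs => rw [← hGe, decomp j G]
        rw [map_add, map_mul, eval_X]
      have key1 : f j * (eval f (Qpart j F) - eval f (Qpart j G)) ∈ Jid f k ^ (d + 1) := by
        have heq : f j * (eval f (Qpart j F) - eval f (Qpart j G)) =
            eval f (Hpart j G) - eval f (Hpart j F) := by
          have := hevF.symm.trans hevG
          linear_combination this
        rw [heq]
        exact sub_mem (Ideal.pow_le_pow_right (Nat.le_succ _) hh') hH_mem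
      have key2 : eval f (Qpart j F) - eval f (Qpart j G) ∈ Jid f k ^ (d + 1) :=
        canc (d + 1) _ key1
      have hq_mem : eval f (Qpart j F) ∈ Jid f (k + 1) ^ (d + 1) := by
        have : eval f (Qpart j F) =
            (eval f (Qpart j F) - eval f (Qpart j G)) + eval f (Qpart j G) := by ring
        rw [this]
        exact add_mem (Ideal.pow_right_mono hJle _ key2) hq'
      have hQcoeff : ∀ β, (Qpart j F).coeff β ∈ Jid f (k + 1) :=
        ihd (Qpart j F) hQF_homog hQF_var hq_mem
      -- now the H part
      have hH_mem' : eval f (Hpart j F) ∈ Jid f (k + 1) ^ (d + 2) := by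
        have heq : eval f (Hpart j F) = eval f F - f j * eval f (Qpart j F) := by
          rw [hevF]; ring
        rw [heq]
        refine sub_mem hev ?_
        rw [pow_succ']
        exact Ideal.mul_mem_mul hfj hq_mem
      obtain ⟨G', hG', hG'V, hG'e⟩ := exists_rep f (k + 1) (d + 2) _ hH_mem'
      have hh'' : eval f (Hpart j G') ∈ Jid f k ^ (d + 2) :=
        eval_mem_pow f (Hpart_homog hG') (Hpart_varLt hk hG'V)
      have hevG' : eval f (Hpart j F) = f j * eval f (Qpart j G') + eval f (Hpart j G') := by
        conv_lhs => rw [← hG'e, decomp j G']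
        rw [map_add, map_mul, eval_X]
      have key3 : f j * eval f (Qpart j G') ∈ Jid f k ^ (d + 1) := by
        have heq : f j * eval f (Qpart j G') =
            eval f (Hpart j F) - eval f (Hpart j G') := by rw [hevG']; ring
        rw [heq]
        exact sub_mem hH_mem (Ideal.pow_le_pow_right (Nat.le_succ _) hh'')
      have key4 : eval f (Qpart j G') ∈ Jid f k ^ (d + 1) := canc (d + 1) _ key3
      obtain ⟨W, hW, hWV, hWe⟩ := exists_rep f k (d + 1) _ key4
      have hH'_homog : (Hpart j F - C (f j) * W).IsHomogeneous (d + 1) :=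
        hHF_homog.sub (hW.C_mul _)
      have hH'_var : VarLt k (Hpart j F - C (f j) * W) := hHF_var.sub (hWV.C_mul _)
      have hH'_ev : eval f (Hpart j F - C (f j) * W) ∈ Jid f k ^ (d + 2) := by
        rw [map_sub, map_mul, eval_C, hWe]
        have heq : eval f (Hpart j F) - f j * eval f (Qpart j G') =
            eval f (Hpart j G') := by rw [hevG']; ring
        rw [heq]
        exact hh''
      have hH'coeff := Pk (d + 1) _ hH'_homog hH'_var hH'_ev
      have hHcoeff : ∀ β, (Hpart j F).coeff β ∈ Jid f (k + 1) := by
        intro β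
        have h1 := hH'coeff β
        rw [coeff_sub, coeff_C_mul] at h1
        have heq : (Hpart j F).coeff β =
            ((Hpart j F).coeff β - f j * W.coeff β) + f j * W.coeff β := by ring
        rw [heq]
        exact add_mem (hJle h1) (Ideal.mul_mem_right _ _ hfj)
      intro α
      by_cases hαj : α j = 0
      · rw [← coeff_Hpart_of_eq_zero j F hαj]
        exact hHcoeff α
      · rw [← coeff_Qpart_of_ne_zero j F hαj]
        exact hQcoeff _

end RegSeqQuasiAux

open RegSeqQuasiAux in
/-- If `I` is generated by a regular sequence and `a ∈ I^ℓ \ I^(ℓ+1)`, then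
`a * f_j^i ∈ I^(ℓ+i) \ I^(ℓ+i+1)`. -/
theorem mul_pow_mem_sub_of_regular_sequence
    {R : Type*} [CommRing R] {m : ℕ} (f : Fin m → R)
    (hreg : ∀ k : Fin m, ∀ r : R,
      r * f k ∈ Ideal.span (f '' {l : Fin m | l < k}) →
      r ∈ Ideal.span (f '' {l : Fin m | l < k}))
    (hproper : Ideal.span (Set.range f) ≠ ⊤)
    (I : Ideal R) (hI : I = Ideal.span (Set.range f))
    (a : R) (ℓ : ℕ) (ha : a ∈ I ^ ℓ) (ha' : a ∉ I ^ (ℓ + 1))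
    (j : Fin m) (i : ℕ) (hi : 0 < i) :
    a * f j ^ i ∈ I ^ (ℓ + i) ∧ a * f j ^ i ∉ I ^ (ℓ + i + 1) := by
  have hIJ : I = Jid f m := by
    rw [hI]
    unfold Jid
    congr 1
    rw [show {l : Fin m | (l : ℕ) < m} = Set.univ from Set.eq_univ_of_forall fun l => l.isLt,
      Set.image_univ]
  rw [hIJ] at ha ha' ⊢
  have P := keyP f hreg m (le_refl m)
  have cancel_main : ∀ (e : ℕ) (b : R), b ∈ Jid f m ^ e →
      b * f j ∈ Jid f m ^ (e + 2) → b ∈ Jid f m ^ (e + 1) := by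
    intro e b hb hbf
    obtain ⟨B, hB, hBV, hBe⟩ := exists_rep f m e b hb
    have hXB : (MvPolynomial.X j * B).IsHomogeneous (e + 1) := by
      have := (MvPolynomial.isHomogeneous_X R j).mul hB
      rwa [add_comm] at this
    have hXBV : VarLt m (MvPolynomial.X j * B) := fun α _ l _ => l.isLt
    have hev : MvPolynomial.eval f (MvPolynomial.X j * B) ∈ Jid f m ^ (e + 1 + 1) := by
      rw [map_mul, MvPolynomial.eval_X, hBe, mul_comm]
      exact hbf
    have hcoeff := P (e + 1) _ hXB hXBV hev
    have hBcoeff : ∀ α, B.coeff α ∈ Jid f m := by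
      intro α
      have := hcoeff (Finsupp.single j 1 + α)
      rwa [MvPolynomial.coeff_X_mul] at this
    have := eval_mem_pow_succ f hB hBV hBcoeff
    rwa [hBe] at this
  have main : ∀ n : ℕ, a * f j ^ n ∈ Jid f m ^ (ℓ + n) ∧ a * f j ^ n ∉ Jid f m ^ (ℓ + n + 1) := by
    intro n
    induction n with
    | zero => simpa using ⟨ha, ha'⟩
    | succ n ih =>
      obtain ⟨h1, h2⟩ := ih
      have hfm : f j ∈ Jid f m := mem_Jid f j.isLt
      constructor
      · have heq : a * f j ^ (n + 1) = a * f j ^ n * f j := by ring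
        rw [heq, show ℓ + (n + 1) = ℓ + n + 1 from rfl, pow_succ]
        exact Ideal.mul_mem_mul h1 hfm
      · intro hmem
        apply h2
        apply cancel_main (ℓ + n) _ h1
        have heq : a * f j ^ n * f j = a * f j ^ (n + 1) := by ring
        rw [heq]
        exact hmem
  exact main i
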